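/- The threshold satisfies b* > c, and K_{j−1} > 0 for every j ∈ {1, …, m_p+1}. -/

import Mathlib

open Finset Matrix MeasureTheory

/-- The (i,j) cofactor of a square matrix: (−1)^(i+j) times the determinant of the
submatrix obtained by deleting row `i` and column `j`. -/
noncomputable def cof {n : ℕ} (M : Matrix (Fin (n + 1)) (Fin (n + 1)) ℝ)
    (i j : Fin (n + 1)) : ℝ :=
  (-1 : ℝ) ^ ((i : ℕ) + (j : ℕ)) * (M.submatrix i.succAbove j.succAbove).det

/-- Sign of a product of nonzero reals. -/
lemma signProd {ι : Type*} [DecidableEq ι] (s : Finset ι) (f : ι → ℝ)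
    (h : ∀ i ∈ s, f i ≠ 0) :
    0 < (-1 : ℝ) ^ (s.filter (fun i => f i < 0)).card * ∏ i ∈ s, f i := by
  classical
  revert h
  induction s using Finset.induction_on with
  | empty => intro _; simp
  | insert a s ha ih =>
    intro h
    have hprev := ih (fun i hi => h i (Finset.mem_insert_of_mem hi))
    rw [Finset.filter_insert, Finset.prod_insert ha]
    by_cases hfa : f a < 0
    · rw [if_pos hfa, Finset.card_insert_of_notMem (fun hm => ha (Finset.mem_of_mem_filter a hm))]
      have key : (-1 : ℝ) ^ ((s.filter (fun i => f i < 0)).card + 1) * (f a * ∏ i ∈ s, f i)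
          = (-f a) * ((-1 : ℝ) ^ (s.filter (fun i => f i < 0)).card * ∏ i ∈ s, f i) := by
        rw [pow_succ]; ring
      rw [key]
      exact mul_pos (neg_pos.2 hfa) hprev
    · rw [if_neg hfa]
      have hpos : 0 < f a :=
        lt_of_le_of_ne (not_lt.1 hfa) (Ne.symm (h a (Finset.mem_insert_self a s)))
      have key : (-1 : ℝ) ^ ((s.filter (fun i => f i < 0)).card) * (f a * ∏ i ∈ s, f i)
          = f a * ((-1 : ℝ) ^ (s.filter (fun i => f i < 0)).card * ∏ i ∈ s, f i) := by ring
      rw [key]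
      exact mul_pos hpos hprev

lemma divPosOfSameSign (e : ℕ) {N D : ℝ} (h1 : 0 < (-1 : ℝ) ^ e * N)
    (h2 : 0 < (-1 : ℝ) ^ e * D) : 0 < N / D := by
  rcases Nat.even_or_odd e with he | he
  · rw [he.neg_one_pow, one_mul] at h1 h2
    exact div_pos h1 h2
  · rw [he.neg_one_pow, neg_one_mul, neg_pos] at h1 h2
    rw [show N / D = (-N) / (-D) by rw [neg_div_neg_eq]]
    exact div_pos (neg_pos.2 h1) (neg_pos.2 h2)

/-- Lagrange-interpolation identity: summing values divided by node differences
    yields the top coefficient. -/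
lemma lagSum (m : ℕ) (v : ℕ → ℝ) (hv : Set.InjOn v (Finset.range (m + 1)))
    (f : Polynomial ℝ) (hf : f.natDegree ≤ m) :
    ∑ j ∈ Finset.range (m + 1),
      f.eval (v j) * (∏ l ∈ (Finset.range (m + 1)).erase j, (v j - v l))⁻¹ = f.coeff m := by
  classical
  have hcard : #(Finset.range (m + 1)) = m + 1 := Finset.card_range _
  have hdeg : f.degree < #(Finset.range (m + 1)) := by
    rw [hcard]
    exact lt_of_le_of_lt f.degree_le_natDegree (by exact_mod_cast Nat.lt_succ_of_le hf)
  have h := Lagrange.eq_interpolate hv hdeg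
  have hcoeff := congrArg (fun p => Polynomial.coeff p m) h
  simp only [Lagrange.interpolate_apply, Polynomial.finset_sum_coeff,
    Polynomial.coeff_C_mul] at hcoeff
  rw [hcoeff]
  refine Finset.sum_congr rfl fun j hj => ?_
  congr 1
  have hnd : (Lagrange.basis (Finset.range (m + 1)) v j).natDegree = m := by
    rw [Lagrange.natDegree_basis hv hj, hcard]; omega
  have hlc : (Lagrange.basis (Finset.range (m + 1)) v j).coeff m
      = (Lagrange.basis (Finset.range (m + 1)) v j).leadingCoeff := by
    rw [Polynomial.leadingCoeff, hnd]
  rw [hlc, Lagrange.basis, Polynomial.leadingCoeff_prod, ← Finset.prod_inv_distrib]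
  refine Finset.prod_congr rfl fun l hl => ?_
  rw [Lagrange.basisDivisor, Polynomial.leadingCoeff_mul, Polynomial.leadingCoeff_C,
    (Polynomial.monic_X_sub_C (v l)).leadingCoeff, mul_one]

lemma cofAdj {n : ℕ} (M : Matrix (Fin (n + 1)) (Fin (n + 1)) ℝ) (j : Fin (n + 1)) :
    cof M 0 j = M.adjugate j 0 := by
  classical
  rw [Matrix.adjugate_apply, Matrix.det_succ_row_zero]
  rw [Finset.sum_eq_single j]
  · have h1 : (M.updateRow 0 (Pi.single j 1)) 0 j = 1 := by
      rw [Matrix.updateRow_self, Pi.single_eq_same]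
    have h2 : (M.updateRow 0 (Pi.single j 1)).submatrix Fin.succ j.succAbove
        = M.submatrix Fin.succ j.succAbove := by
      ext a b
      simp [Matrix.submatrix_apply, Matrix.updateRow_ne (Fin.succ_ne_zero a)]
    rw [h1, h2, cof]
    simp [Fin.succAbove_zero]
  · intro k _ hk
    have : (M.updateRow 0 (Pi.single j 1)) 0 k = 0 := by
      rw [Matrix.updateRow_self, Pi.single_eq_of_ne hk]
    rw [this]; ring
  · intro h; exact absurd (Finset.mem_univ j) h

theorem stmt7 (σ μ ρ lamn lamp c : ℝ)
    (hσ : 0 < σ) (hρ : 0 < ρ) (hlamn : 0 < lamn) (hlamp : 0 < lamp) (hc : 0 < c)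
    (mp mn : ℕ) (hmp : 1 ≤ mp) (hmn : 1 ≤ mn)
    (ωp βp ωn βn : ℕ → ℝ)
    (hωp : ∀ k, 1 ≤ k → k ≤ mp → 0 < ωp k)
    (hωpsum : ∑ k ∈ Finset.Icc 1 mp, ωp k = 1)
    (hβp1 : 0 < βp 1)
    (hβpmono : ∀ k, 1 ≤ k → k < mp → βp k < βp (k + 1))
    (hωn : ∀ k, 1 ≤ k → k ≤ mn → 0 < ωn k)
    (hωnsum : ∑ k ∈ Finset.Icc 1 mn, ωn k = 1)
    (hβn1 : 0 < βn 1)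
    (hβnmono : ∀ k, 1 ≤ k → k < mn → βn k < βn (k + 1))
    (r : ℕ → ℝ)
    (hroot : ∀ j, j ≤ mp →
      σ ^ 2 * (r j) ^ 2 / 2 + μ * r j - (ρ + lamn + lamp)
        + lamp * ∑ i ∈ Finset.Icc 1 mp, ωp i * βp i / (βp i - r j)
        + lamn * ∑ i ∈ Finset.Icc 1 mn, ωn i * βn i / (r j + βn i) = 0)
    (hr0 : 0 < r 0)
    (hinter : ∀ k, 1 ≤ k → k ≤ mp → r (k - 1) < βp k ∧ βp k < r k)
    (A : Matrix (Fin (mp + 1)) (Fin (mp + 1)) ℝ)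
    (hA : ∀ i j : Fin (mp + 1), A i j = if (i : ℕ) = 0 then 1 else βp i / (βp i - r j))
    (hdet : A.det ≠ 0)
    (R : ℝ)
    (hR : R = (∏ k ∈ Finset.range (mp + 1), r k) / ∏ k ∈ Finset.Icc 1 mp, βp k)
    (K : ℕ → ℝ)
    (hK : ∀ j : Fin (mp + 1), K j = R * cof A 0 j / ((r j) ^ 2 * A.det))
    (b : ℝ)
    (hb : b = c + (∑ i ∈ Finset.range (mp + 1), 1 / r i) - ∑ i ∈ Finset.Icc 1 mp, 1 / βp i)
    :
    c < b ∧ ∀ j, j ≤ mp → 0 < K j := by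
  classical
  -- monotonicity of r
  have hrlt : ∀ b₁, b₁ ≤ mp → ∀ a, a < b₁ → r a < r b₁ := by
    intro b₁
    induction b₁ with
    | zero => intro _ a ha; omega
    | succ n ih =>
      intro hb1 a ha
      have hstep : r n < r (n + 1) := by
        have h1 := hinter (n + 1) (by omega) hb1
        rw [Nat.add_sub_cancel] at h1
        linarith [h1.1, h1.2]
      rcases Nat.lt_succ_iff_lt_or_eq.mp ha with h | h
      · exact lt_trans (ih (by omega) a h) hstep
      · rw [h]; exact hstep
  have hrle : ∀ a b₁, a ≤ b₁ → b₁ ≤ mp → r a ≤ r b₁ := by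
    intro a b₁ hab hb1
    rcases eq_or_lt_of_le hab with h | h
    · rw [h]
    · exact le_of_lt (hrlt b₁ hb1 a h)
  have hrpos : ∀ j, j ≤ mp → 0 < r j := by
    intro j hj
    rcases Nat.eq_zero_or_pos j with h | h
    · rw [h]; exact hr0
    · exact lt_trans hr0 (hrlt j hj 0 h)
  have hβle : ∀ d a, 1 ≤ a → a + d ≤ mp → βp a ≤ βp (a + d) := by
    intro d
    induction d with
    | zero => intro a _ _; simp
    | succ n ih =>
      intro a h1 h2
      have h3 : βp a ≤ βp (a + n) := ih a h1 (by omega)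
      have h4 : βp (a + n) < βp (a + n + 1) := hβpmono (a + n) (by omega) (by omega)
      have h5 : a + (n + 1) = a + n + 1 := rfl
      rw [h5]
      linarith
  have hβpos : ∀ i, 1 ≤ i → i ≤ mp → 0 < βp i := by
    intro i h1 h2
    have h3 := hβle (i - 1) 1 le_rfl (by omega)
    rw [show 1 + (i - 1) = i by omega] at h3
    linarith
  have hbr : ∀ i j, 1 ≤ i → i ≤ j → j ≤ mp → βp i < r j := by
    intro i j h1 h2 h3
    have h4 := (hinter i h1 (by omega)).2
    have h5 := hrle i j h2 h3
    linarith
  have hrb : ∀ i j, 1 ≤ i → i ≤ mp → j < i → r j < βp i := by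
    intro i j h1 h2 h3
    have h4 := (hinter i h1 h2).1
    have h5 := hrle j (i - 1) (by omega) (by omega)
    linarith
  have hβne : ∀ i j, 1 ≤ i → i ≤ mp → j ≤ mp → βp i - r j ≠ 0 := by
    intro i j h1 h2 h3
    rcases Nat.lt_or_ge j i with h | h
    · have := hrb i j h1 h2 h
      intro hcon; linarith
    · have := hbr i j h1 h h3
      intro hcon; linarith
  have hinj : Set.InjOn r ↑(Finset.range (mp + 1)) := by
    intro a ha bb hbb hab
    simp only [Finset.coe_range, Set.mem_Iio] at ha hbb
    by_contra hne
    rcases Nat.lt_or_ge a bb with h | h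
    · exact absurd hab (ne_of_lt (hrlt bb (by omega) a h))
    · have h' : bb < a := by omega
      exact absurd hab.symm (ne_of_lt (hrlt a (by omega) bb h'))
  -- the candidate solution of A x = e₀
  set xf : Fin (mp + 1) → ℝ := fun j =>
    (∏ i ∈ Finset.Icc 1 mp, (r ↑j - βp i)) *
      (∏ l ∈ (Finset.range (mp + 1)).erase ↑j, (r ↑j - r l))⁻¹ with hxf
  -- the polynomial Q
  set Q : Polynomial ℝ := ∏ i ∈ Finset.Icc 1 mp, (Polynomial.X - Polynomial.C (βp i)) with hQ
  have hQdeg : Q.natDegree = mp := by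
    rw [hQ, Polynomial.natDegree_prod _ _ (fun i _ => Polynomial.X_sub_C_ne_zero (βp i))]
    simp [Polynomial.natDegree_X_sub_C, Nat.card_Icc]
  have hQmonic : Q.Monic := Polynomial.monic_prod_of_monic _ _
    (fun i _ => Polynomial.monic_X_sub_C (βp i))
  have hQcoeff : Q.coeff mp = 1 := by
    rw [← hQdeg]; exact hQmonic.coeff_natDegree
  have hQeval : ∀ j, Q.eval (r j) = ∏ i ∈ Finset.Icc 1 mp, (r j - βp i) := by
    intro j; rw [hQ]; simp [Polynomial.eval_prod]
  -- A *ᵥ xf = e₀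
  have hm1 : A.mulVec xf = Pi.single (0 : Fin (mp + 1)) 1 := by
    funext i
    simp only [Matrix.mulVec, dotProduct]
    by_cases hi : (i : ℕ) = 0
    · have hi0 : i = 0 := Fin.ext hi
      subst hi0
      rw [Pi.single_eq_same]
      have hA0 : ∀ l : Fin (mp + 1), A 0 l * xf l = xf l := by
        intro l; rw [hA]; simp
      simp only [hA0]
      simp only [hxf]
      rw [Fin.sum_univ_eq_sum_range (fun j =>
        (∏ i ∈ Finset.Icc 1 mp, (r j - βp i)) *
          (∏ l ∈ (Finset.range (mp + 1)).erase j, (r j - r l))⁻¹) (mp + 1)]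
      have hconv : ∑ j ∈ Finset.range (mp + 1),
          (∏ i ∈ Finset.Icc 1 mp, (r j - βp i)) *
            (∏ l ∈ (Finset.range (mp + 1)).erase j, (r j - r l))⁻¹
          = ∑ j ∈ Finset.range (mp + 1),
            Q.eval (r j) * (∏ l ∈ (Finset.range (mp + 1)).erase j, (r j - r l))⁻¹ := by
        refine Finset.sum_congr rfl fun j _ => ?_
        rw [hQeval]
      rw [hconv, lagSum mp r hinj Q (le_of_eq hQdeg), hQcoeff]
    · have hine : i ≠ 0 := fun h => hi (by rw [h]; rfl)
      rw [Pi.single_eq_of_ne hine]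
      have h1le : 1 ≤ (i : ℕ) := Nat.pos_of_ne_zero hi
      have hile : (i : ℕ) ≤ mp := by omega
      have himem : (i : ℕ) ∈ Finset.Icc 1 mp := Finset.mem_Icc.mpr ⟨h1le, hile⟩
      set Qi : Polynomial ℝ := Polynomial.C (-(βp ↑i)) *
        ∏ k ∈ (Finset.Icc 1 mp).erase ↑i, (Polynomial.X - Polynomial.C (βp k)) with hQi
      have hsum : ∑ l : Fin (mp + 1), A i l * xf l
          = ∑ j ∈ Finset.range (mp + 1),
            Qi.eval (r j) * (∏ l ∈ (Finset.range (mp + 1)).erase j, (r j - r l))⁻¹ := by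
        rw [← Fin.sum_univ_eq_sum_range (fun j =>
          Qi.eval (r j) * (∏ l ∈ (Finset.range (mp + 1)).erase j, (r j - r l))⁻¹) (mp + 1)]
        refine Finset.sum_congr rfl fun l _ => ?_
        rw [hA i l, if_neg hi]
        simp only [hxf]
        have hlle : (l : ℕ) ≤ mp := by omega
        have hbne : βp ↑i - r ↑l ≠ 0 := hβne ↑i ↑l h1le hile hlle
        have hsplitQ : (∏ k ∈ Finset.Icc 1 mp, (r ↑l - βp k))
            = (r ↑l - βp ↑i) * ∏ k ∈ (Finset.Icc 1 mp).erase ↑i, (r ↑l - βp k) :=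
          (Finset.mul_prod_erase _ _ himem).symm
        have hQieval : Qi.eval (r ↑l)
            = -(βp ↑i) * ∏ k ∈ (Finset.Icc 1 mp).erase ↑i, (r ↑l - βp k) := by
          rw [hQi]; simp [Polynomial.eval_prod]
        rw [hsplitQ, hQieval]
        have key : βp ↑i / (βp ↑i - r ↑l) *
            ((r ↑l - βp ↑i) * ∏ k ∈ (Finset.Icc 1 mp).erase ↑i, (r ↑l - βp k))
            = -(βp ↑i) * ∏ k ∈ (Finset.Icc 1 mp).erase ↑i, (r ↑l - βp k) := by
          field_simp
          ring
        rw [← mul_assoc, key]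
      have hQideg : Qi.natDegree < mp := by
        have h1 : Qi.natDegree ≤
            (∏ k ∈ (Finset.Icc 1 mp).erase ↑i, (Polynomial.X - Polynomial.C (βp k))).natDegree := by
          rw [hQi]
          refine le_trans (Polynomial.natDegree_mul_le) ?_
          simp [Polynomial.natDegree_C]
        have h2 : (∏ k ∈ (Finset.Icc 1 mp).erase ↑i,
            (Polynomial.X - Polynomial.C (βp k))).natDegree ≤ mp - 1 := by
          refine le_trans (Polynomial.natDegree_prod_le _ _) ?_
          have : ∀ k ∈ (Finset.Icc 1 mp).erase ↑i,
              (Polynomial.X - Polynomial.C (βp k)).natDegree = 1 :=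
            fun k _ => Polynomial.natDegree_X_sub_C (βp k)
          rw [Finset.sum_congr rfl this, Finset.sum_const, smul_eq_mul, mul_one,
            Finset.card_erase_of_mem himem, Nat.card_Icc]
          omega
        omega
      rw [hsum, lagSum mp r hinj Qi (le_of_lt hQideg),
        Polynomial.coeff_eq_zero_of_natDegree_lt hQideg]
  -- adjugate entries
  have hadj : ∀ jf : Fin (mp + 1), A.adjugate jf 0 = A.det * xf jf := by
    have h1 : A.adjugate *ᵥ (A *ᵥ xf) = A.det • xf := by
      rw [Matrix.mulVec_mulVec, Matrix.adjugate_mul, Matrix.smul_mulVec,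
        Matrix.one_mulVec]
    rw [hm1] at h1
    intro jf
    have h2 := congrFun h1 jf
    rw [Matrix.mulVec_single] at h2
    simpa using h2
  -- positivity of xf
  have hxpos : ∀ jf : Fin (mp + 1), 0 < xf jf := by
    intro jf
    have hj : (jf : ℕ) ≤ mp := by omega
    set j : ℕ := (jf : ℕ) with hjdef
    have hNfil : (Finset.Icc 1 mp).filter (fun i => r j - βp i < 0) = Finset.Icc (j + 1) mp := by
      ext i
      simp only [Finset.mem_filter, Finset.mem_Icc, sub_neg]
      constructor
      · rintro ⟨⟨h1, h2⟩, h3⟩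
        refine ⟨?_, h2⟩
        by_contra hcon
        push_neg at hcon
        have := hbr i j h1 (by omega) hj
        linarith
      · rintro ⟨h1, h2⟩
        exact ⟨⟨by omega, h2⟩, hrb i j (by omega) h2 (by omega)⟩
    have hDfil : ((Finset.range (mp + 1)).erase j).filter (fun l => r j - r l < 0)
        = Finset.Icc (j + 1) mp := by
      ext l
      simp only [Finset.mem_filter, Finset.mem_erase, Finset.mem_range, Finset.mem_Icc, sub_neg]
      constructor
      · rintro ⟨⟨hne, hlt⟩, h3⟩
        refine ⟨?_, by omega⟩
        by_contra hcon
        push_neg at hcon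
        have := hrle l j (by omega) hj
        linarith
      · rintro ⟨h1, h2⟩
        exact ⟨⟨by omega, by omega⟩, hrlt l h2 j (by omega)⟩
    have hN := signProd (Finset.Icc 1 mp) (fun i => r j - βp i)
      (fun i hi => by
        rw [Finset.mem_Icc] at hi
        have h9 := hβne i j hi.1 hi.2 hj
        intro hcon
        have hcon' : r j - βp i = 0 := hcon
        apply h9; linarith)
    have hD := signProd ((Finset.range (mp + 1)).erase j) (fun l => r j - r l)
      (fun l hl => by
        rw [Finset.mem_erase, Finset.mem_range] at hl
        rcases Nat.lt_or_ge l j with h | h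
        · have h9 := hrlt j hj l h
          intro hcon
          have hcon' : r j - r l = 0 := hcon
          linarith
        · have h' : j < l := by omega
          have h9 := hrlt l (by omega) j h'
          intro hcon
          have hcon' : r j - r l = 0 := hcon
          linarith)
    rw [hNfil] at hN
    rw [hDfil] at hD
    rw [Nat.card_Icc] at hN hD
    have hpos := divPosOfSameSign (mp + 1 - (j + 1)) hN hD
    rw [hxf]
    simpa [div_eq_mul_inv] using hpos
  have hRpos : 0 < R := by
    rw [hR]
    apply div_pos
    · apply Finset.prod_pos
      intro k hk
      rw [Finset.mem_range] at hk
      exact hrpos k (by omega)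
    · apply Finset.prod_pos
      intro k hk
      rw [Finset.mem_Icc] at hk
      exact hβpos k hk.1 hk.2
  constructor
  · -- c < b
    have hsplit : ∑ i ∈ Finset.range (mp + 1), 1 / r i
        = (∑ i ∈ Finset.range mp, 1 / r i) + 1 / r mp := Finset.sum_range_succ _ _
    have himg : Finset.Icc 1 mp = Finset.image (· + 1) (Finset.range mp) := by
      ext a
      simp only [Finset.mem_Icc, Finset.mem_image, Finset.mem_range]
      constructor
      · rintro ⟨h1, h2⟩; exact ⟨a - 1, by omega, by omega⟩
      · rintro ⟨b₁, hb1, hb2⟩; omega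
    have hreindex : ∑ i ∈ Finset.Icc 1 mp, 1 / βp i
        = ∑ i ∈ Finset.range mp, 1 / βp (i + 1) := by
      rw [himg, Finset.sum_image (fun a _ b₁ _ h => by omega)]
    have hterm : ∀ i ∈ Finset.range mp, 1 / βp (i + 1) < 1 / r i := by
      intro i hi
      rw [Finset.mem_range] at hi
      have h1 := (hinter (i + 1) (by omega) (by omega)).1
      rw [Nat.add_sub_cancel] at h1
      exact one_div_lt_one_div_of_lt (hrpos i (by omega)) h1
    have hlt : ∑ i ∈ Finset.range mp, 1 / βp (i + 1) < ∑ i ∈ Finset.range mp, 1 / r i :=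
      Finset.sum_lt_sum_of_nonempty (by rw [Finset.nonempty_range_iff]; omega) hterm
    have hlast : 0 < 1 / r mp := one_div_pos.mpr (hrpos mp le_rfl)
    rw [hb, hsplit, hreindex]
    linarith
  · intro j hj
    have hKj : K j = R * (A.det * xf ⟨j, by omega⟩) / (r j ^ 2 * A.det) := by
      have h0 := hK ⟨j, by omega⟩
      rw [cofAdj, hadj] at h0
      exact h0
    have hrj : r j ≠ 0 := ne_of_gt (hrpos j hj)
    have hKj' : K j = R * xf ⟨j, by omega⟩ / r j ^ 2 := by
      rw [hKj]
      field_simp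
    rw [hKj']
    exact div_pos (mul_pos hRpos (hxpos ⟨j, by omega⟩)) (by positivity)
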